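/- Let A and B be permutations of {1,...,n} with SUS(A) ≤ 3 and SUS(B) ≤ 3. If M(A) = M(B) (their buffer sequences coincide entrywise), then A = B. -/
import Mathlib


/-- The set of values appearing in the first `i` entries of `A` (indices `1..i`). -/
def prefSet (A : ℕ → ℕ) (i : ℕ) : Finset ℕ := (Finset.Icc 1 i).image A

/-- `H_i`: the maximum value among the first `i` entries (0 for `i = 0`). -/
def hi (A : ℕ → ℕ) (i : ℕ) : ℕ := (prefSet A i).sup id

/-- `ACK_i`: the least positive integer not among the first `i` entries. -/
noncomputable def ackSeq (A : ℕ → ℕ) (i : ℕ) : ℕ := sInf {k | 0 < k ∧ k ∉ prefSet A i}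

/-- The buffer size `M_i = H_i - (ACK_i - 1)`. -/
noncomputable def buf (A : ℕ → ℕ) (i : ℕ) : ℤ := (hi A i : ℤ) - ackSeq A i + 1

/-- `A` restricted to `{1,...,n}` is a permutation of `{1,...,n}`. -/
def IsPermOn (A : ℕ → ℕ) (n : ℕ) : Prop := Set.BijOn A (Set.Icc 1 n) (Set.Icc 1 n)

/-- The positions `1..n` can be partitioned into `k` classes, each of which
induces a strictly increasing subsequence of `A`. -/
def SUSle (A : ℕ → ℕ) (n k : ℕ) : Prop :=
  ∃ c : ℕ → ℕ, (∀ i ∈ Finset.Icc 1 n, c i < k) ∧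
    ∀ i j, i ∈ Finset.Icc 1 n → j ∈ Finset.Icc 1 n → i < j → c i = c j → A i < A j

/-- `SUS(A)`: minimum number of increasing subsequences partitioning `A₁,…,Aₙ`. -/
noncomputable def sus (A : ℕ → ℕ) (n : ℕ) : ℕ := sInf {k | SUSle A n k}

/-- `LDS(A)`: maximum length of a strictly decreasing subsequence of `A₁,…,Aₙ`. -/
noncomputable def lds (A : ℕ → ℕ) (n : ℕ) : ℕ :=
  sSup {m | ∃ s : Fin m → ℕ, StrictMono s ∧ (∀ t, s t ∈ Finset.Icc 1 n) ∧
    ∀ t u : Fin m, t < u → A (s u) < A (s t)}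

-- basic lemmas
lemma prefSet_zero (A : ℕ → ℕ) : prefSet A 0 = ∅ := by simp [prefSet]

lemma mem_prefSet {A : ℕ → ℕ} {i x : ℕ} :
    x ∈ prefSet A i ↔ ∃ q, 1 ≤ q ∧ q ≤ i ∧ A q = x := by
  simp [prefSet, Finset.mem_image, Finset.mem_Icc]
  tauto

lemma prefSet_succ (A : ℕ → ℕ) (i : ℕ) :
    prefSet A (i+1) = insert (A (i+1)) (prefSet A i) := by
  ext x
  simp only [mem_prefSet, Finset.mem_insert, mem_prefSet]
  constructor
  · rintro ⟨q, h1, h2, rfl⟩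
    rcases Nat.lt_or_ge q (i+1) with h | h
    · exact Or.inr ⟨q, h1, by omega, rfl⟩
    · left; congr 1; omega
  · rintro (h | ⟨q, h1, h2, rfl⟩)
    · exact ⟨i+1, by omega, le_refl _, h.symm⟩
    · exact ⟨q, h1, by omega, rfl⟩

lemma prefSet_mono (A : ℕ → ℕ) {i j : ℕ} (h : i ≤ j) : prefSet A i ⊆ prefSet A j := by
  intro x hx; rw [mem_prefSet] at hx ⊢
  obtain ⟨q, h1, h2, h3⟩ := hx; exact ⟨q, h1, by omega, h3⟩

lemma le_hi {A : ℕ → ℕ} {i x : ℕ} (h : x ∈ prefSet A i) : x ≤ hi A i :=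
  Finset.le_sup (f := id) h

lemma hi_mem {A : ℕ → ℕ} {i : ℕ} (h : 1 ≤ hi A i) : hi A i ∈ prefSet A i := by
  have hne : (prefSet A i).Nonempty := by
    by_contra hc
    rw [Finset.not_nonempty_iff_eq_empty] at hc
    rw [hi, hc] at h; simp at h
  obtain ⟨b, hb, hs⟩ := Finset.exists_mem_eq_sup _ hne id
  rw [hi, hs]; exact hb

lemma hi_succ (A : ℕ → ℕ) (i : ℕ) : hi A (i+1) = max (A (i+1)) (hi A i) := by
  rw [hi, prefSet_succ, Finset.sup_insert]; rfl

lemma ack_set_nonempty (A : ℕ → ℕ) (i : ℕ) : {k | 0 < k ∧ k ∉ prefSet A i}.Nonempty := by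
  refine ⟨hi A i + 1, by omega, fun h => ?_⟩
  have := le_hi h; omega

lemma ackq_pos (A : ℕ → ℕ) (i : ℕ) : 0 < ackSeq A i :=
  (Nat.sInf_mem (ack_set_nonempty A i)).1

lemma ackq_not_mem (A : ℕ → ℕ) (i : ℕ) : ackSeq A i ∉ prefSet A i :=
  (Nat.sInf_mem (ack_set_nonempty A i)).2

lemma ackq_le {A : ℕ → ℕ} {i x : ℕ} (h0 : 0 < x) (h : x ∉ prefSet A i) : ackSeq A i ≤ x :=
  Nat.sInf_le ⟨h0, h⟩

lemma mem_of_lt_ackq {A : ℕ → ℕ} {i k : ℕ} (h0 : 0 < k) (h : k < ackSeq A i) :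
    k ∈ prefSet A i := by
  by_contra hc
  exact absurd (ackq_le h0 hc) (by omega)

lemma ackq_le_hi_add_one (A : ℕ → ℕ) (i : ℕ) : ackSeq A i ≤ hi A i + 1 :=
  ackq_le (by omega) (fun h => by have := le_hi h; omega)

lemma ackq_mono (A : ℕ → ℕ) {i j : ℕ} (h : i ≤ j) : ackSeq A i ≤ ackSeq A j :=
  ackq_le (ackq_pos A j) (fun hc => ackq_not_mem A j (prefSet_mono A h hc))

lemma ackq_zero (A : ℕ → ℕ) : ackSeq A 0 = 1 := by
  refine le_antisymm (ackq_le (by omega) (by simp [prefSet_zero])) (ackq_pos A 0)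

lemma hi_zero (A : ℕ → ℕ) : hi A 0 = 0 := by simp [hi, prefSet_zero]

lemma buf_zero (A : ℕ → ℕ) : buf A 0 = 0 := by
  simp [buf, hi_zero, ackq_zero]

-- permutation lemmas
lemma perm_maps {A : ℕ → ℕ} {n i : ℕ} (hA : IsPermOn A n) (h1 : 1 ≤ i) (h2 : i ≤ n) :
    1 ≤ A i ∧ A i ≤ n := by
  have := hA.1 (Set.mem_Icc.2 ⟨h1, h2⟩)
  exact Set.mem_Icc.1 this

lemma perm_not_mem {A : ℕ → ℕ} {n k m : ℕ} (hA : IsPermOn A n) (hk1 : 1 ≤ k)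
    (hkn : k ≤ n) (hm : m < k) : A k ∉ prefSet A m := by
  intro h
  rw [mem_prefSet] at h
  obtain ⟨q, hq1, hq2, hq3⟩ := h
  have : q = k := hA.2.1 (Set.mem_Icc.2 ⟨hq1, by omega⟩) (Set.mem_Icc.2 ⟨hk1, hkn⟩) hq3
  omega

lemma perm_surj {A : ℕ → ℕ} {n v : ℕ} (hA : IsPermOn A n) (h1 : 1 ≤ v) (h2 : v ≤ n) :
    ∃ t, 1 ≤ t ∧ t ≤ n ∧ A t = v := by
  obtain ⟨t, ht, hv⟩ := hA.2.2 (Set.mem_Icc.2 ⟨h1, h2⟩)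
  exact ⟨t, (Set.mem_Icc.1 ht).1, (Set.mem_Icc.1 ht).2, hv⟩

lemma ack_insert_ne {A : ℕ → ℕ} {i : ℕ} (h : A (i+1) ≠ ackSeq A i) :
    ackSeq A (i+1) = ackSeq A i := by
  refine le_antisymm (ackq_le (ackq_pos A i) ?_) (ackq_mono A (by omega))
  rw [prefSet_succ]
  simp only [Finset.mem_insert]
  push_neg
  exact ⟨fun hc => h hc.symm, ackq_not_mem A i⟩

/-- The four possible step types of a permutation. -/
lemma stepCases {n : ℕ} (X : ℕ → ℕ) (hX : IsPermOn X n) (i : ℕ) (hi1 : i + 1 ≤ n) :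
    (X (i+1) = ackSeq X i ∧ ackSeq X i = hi X i + 1 ∧
      hi X (i+1) = hi X i + 1 ∧ ackSeq X (i+1) = hi X i + 2) ∨
    (X (i+1) = ackSeq X i ∧ ackSeq X i < hi X i ∧
      hi X (i+1) = hi X i ∧ ackSeq X i < ackSeq X (i+1)) ∨
    (ackSeq X i < X (i+1) ∧ X (i+1) < hi X i ∧
      hi X (i+1) = hi X i ∧ ackSeq X (i+1) = ackSeq X i) ∨
    (ackSeq X i < X (i+1) ∧ hi X i < X (i+1) ∧
      hi X (i+1) = X (i+1) ∧ ackSeq X (i+1) = ackSeq X i) := by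
  have hxpos : 1 ≤ X (i+1) ∧ X (i+1) ≤ n := perm_maps hX (by omega) hi1
  have hxnm : X (i+1) ∉ prefSet X i := perm_not_mem hX (by omega) hi1 (by omega)
  have hax : ackSeq X i ≤ X (i+1) := ackq_le (by omega) hxnm
  have haH : ackSeq X i ≤ hi X i + 1 := ackq_le_hi_add_one X i
  rcases eq_or_lt_of_le hax with heq | hlt
  · -- X (i+1) = ackSeq X i
    rcases eq_or_lt_of_le haH with haH1 | haH2
    · -- ackSeq X i = hi X i + 1 : branch 1
      left
      have hhi : hi X (i+1) = hi X i + 1 := by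
        rw [hi_succ, show X (i+1) = hi X i + 1 by omega]
        exact max_eq_left (by omega)
      refine ⟨heq.symm, haH1, hhi, ?_⟩
      have hle : ackSeq X (i+1) ≤ hi X i + 2 := by
        refine ackq_le (by omega) (fun hc => ?_)
        have := le_hi hc
        rw [hhi] at this; omega
      have hge : ¬ ackSeq X (i+1) < hi X i + 2 := by
        intro hc
        have h0 : 0 < ackSeq X (i+1) := ackq_pos X (i+1)
        have hnm : ackSeq X (i+1) ∉ prefSet X (i+1) := ackq_not_mem X (i+1)
        rw [prefSet_succ] at hnm
        simp only [Finset.mem_insert] at hnm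
        push_neg at hnm
        rcases Nat.lt_or_ge (ackSeq X (i+1)) (hi X i + 1) with hc2 | hc2
        · exact hnm.2 (mem_of_lt_ackq h0 (by omega))
        · exact hnm.1 (by omega)
      omega
    · -- branch 2
      have haH' : ackSeq X i < hi X i := by
        rcases eq_or_lt_of_le (show ackSeq X i ≤ hi X i by omega) with h | h
        · exfalso
          have hm : hi X i ∈ prefSet X i := hi_mem (by have := ackq_pos X i; omega)
          rw [← h] at hm
          exact ackq_not_mem X i hm
        · exact h
      right; left
      have hhi : hi X (i+1) = hi X i := by
        rw [hi_succ]; exact max_eq_right (by omega)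
      refine ⟨heq.symm, haH', hhi, ?_⟩
      have hge := ackq_mono X (by omega : i ≤ i + 1)
      rcases eq_or_lt_of_le hge with h | h
      · exfalso
        have hnm := ackq_not_mem X (i+1)
        rw [prefSet_succ] at hnm
        simp only [Finset.mem_insert] at hnm
        push_neg at hnm
        exact hnm.1 (by omega)
      · exact h
  · -- ackSeq X i < X (i+1)
    have hackeq : ackSeq X (i+1) = ackSeq X i := ack_insert_ne (by omega)
    have hxH : X (i+1) ≠ hi X i := by
      intro hc
      have hm : hi X i ∈ prefSet X i := hi_mem (by omega)
      rw [← hc] at hm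
      exact hxnm hm
    rcases Nat.lt_or_ge (X (i+1)) (hi X i) with h | h
    · right; right; left
      refine ⟨hlt, h, ?_, hackeq⟩
      rw [hi_succ]; exact max_eq_right (by omega)
    · right; right; right
      refine ⟨hlt, by omega, ?_, hackeq⟩
      rw [hi_succ]; exact max_eq_left (by omega)

/-- Equal buffer sequences force equal states (prefix max and ACK) at every time. -/
lemma stateEq {n : ℕ} {X Y : ℕ → ℕ} (hX : IsPermOn X n) (hY : IsPermOn Y n)
    (hbuf : ∀ i ≤ n, buf X i = buf Y i) :
    ∀ i ≤ n, hi X i = hi Y i ∧ ackSeq X i = ackSeq Y i := by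
  intro i
  induction i with
  | zero => intro _; exact ⟨by rw [hi_zero, hi_zero], by rw [ackq_zero, ackq_zero]⟩
  | succ i ih =>
    intro h
    obtain ⟨hH, ha⟩ := ih (by omega)
    have hb2 := hbuf (i+1) h
    have hb1 := hbuf i (by omega)
    simp only [buf] at hb1 hb2
    rcases stepCases X hX i h with hx|hx|hx|hx <;>
      rcases stepCases Y hY i h with hy|hy|hy|hy <;>
      constructor <;> omega

lemma susle_of_sus_le {A : ℕ → ℕ} {n : ℕ} (h : sus A n ≤ 3) : SUSle A n 3 := by
  have hne : SUSle A n (n+1) := by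
    refine ⟨fun i => i, fun i hi => ?_, fun i j hi hj hij hc => ?_⟩
    · show i < n + 1
      simp only [Finset.mem_Icc] at hi; omega
    · exfalso
      have : i = j := hc
      omega
  have hne' : (n+1) ∈ {k | SUSle A n k} := hne
  have hmem : SUSle A n (sus A n) := Nat.sInf_mem ⟨n+1, hne'⟩
  obtain ⟨c, hc, hinc⟩ := hmem
  exact ⟨c, fun i hi => lt_of_lt_of_le (hc i hi) h, hinc⟩

/-- Key lemma: at a first disagreement, the permutation placing the larger value
contains a strictly decreasing subsequence of length 4. -/
lemma no_disagree {n : ℕ} {X Y : ℕ → ℕ} (hX : IsPermOn X n) (hY : IsPermOn Y n)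
    (hbuf : ∀ i ≤ n, buf X i = buf Y i) (hsus : SUSle X n 3)
    (u : ℕ) (htn : u + 1 ≤ n)
    (hagree : ∀ j, 1 ≤ j → j ≤ u → X j = Y j)
    (hlt : Y (u+1) < X (u+1)) : False := by
  have hstate := stateEq hX hY hbuf
  obtain ⟨hH, ha⟩ := hstate u (by omega)
  have hb2 := hbuf (u+1) htn
  have hb1 := hbuf u (by omega)
  simp only [buf] at hb1 hb2
  -- both steps must be "fill" steps (branch 3)
  have key : ackSeq X u < Y (u+1) ∧ Y (u+1) < hi X u ∧
      ackSeq X u < X (u+1) ∧ X (u+1) < hi X u := by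
    rcases stepCases X hX u htn with hx|hx|hx|hx <;>
      rcases stepCases Y hY u htn with hy|hy|hy|hy <;> omega
  obtain ⟨hav, hvH, haw, hwH⟩ := key
  -- the prefix sets agree at time u
  have hpref : prefSet X u = prefSet Y u := by
    unfold prefSet
    apply Finset.image_congr
    intro q hq
    simp only [Finset.mem_coe, Finset.mem_Icc] at hq
    exact hagree q hq.1 hq.2
  -- H appears at some position p ≤ u in X
  have hHmem : hi X u ∈ prefSet X u := hi_mem (by omega)
  obtain ⟨p, hp1, hp2, hpH⟩ := mem_prefSet.1 hHmem
  -- v := Y (u+1) is not in X's prefix at time u+1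
  have hvnmY : Y (u+1) ∉ prefSet Y u := perm_not_mem hY (by omega) htn (by omega)
  have hvnm : Y (u+1) ∉ prefSet X (u+1) := by
    rw [prefSet_succ]
    simp only [Finset.mem_insert]
    push_neg
    exact ⟨by omega, by rw [hpref]; exact hvnmY⟩
  -- X places v at some time t' > u+1
  have hv1n : 1 ≤ Y (u+1) ∧ Y (u+1) ≤ n := perm_maps hY (by omega) htn
  obtain ⟨t', ht'1, ht'n, ht'v⟩ := perm_surj hX hv1n.1 hv1n.2
  have ht'gt : u + 1 < t' := by
    by_contra hc
    exact hvnm (mem_prefSet.2 ⟨t', ht'1, by omega, ht'v⟩)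
  obtain ⟨u', rfl⟩ : ∃ u'', t' = u'' + 1 := ⟨t' - 1, by omega⟩
  -- a₂ := ackSeq X u' satisfies a₂ < v
  have hvnm' : Y (u+1) ∉ prefSet X u' := by
    rw [← ht'v]
    exact perm_not_mem hX (by omega) ht'n (by omega)
  have ha2v : ackSeq X u' ≤ Y (u+1) := ackq_le (by omega) hvnm'
  have ha2ne : ackSeq X u' ≠ Y (u+1) := by
    intro hc
    have := (hstate u' (by omega)).2
    have hnmY : Y (u+1) ∉ prefSet Y u' := by
      rw [← hc, this]; exact ackq_not_mem Y u'
    exact hnmY (mem_prefSet.2 ⟨u+1, by omega, by omega, rfl⟩)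
  -- a₂ is still missing after time t' = u'+1
  have ha2nm : ackSeq X u' ∉ prefSet X (u'+1) := by
    rw [prefSet_succ]
    simp only [Finset.mem_insert]
    push_neg
    refine ⟨by rw [ht'v]; omega, ackq_not_mem X u'⟩
  -- X places a₂ at some time s > u'+1
  have ha2pos := ackq_pos X u'
  obtain ⟨s, hs1, hsn, hsa⟩ := perm_surj hX ha2pos (by omega)
  have hsgt : u' + 1 < s := by
    by_contra hc
    exact ha2nm (mem_prefSet.2 ⟨s, hs1, by omega, hsa⟩)
  -- now the decreasing chain p < u+1 < u'+1 < s with values H > w > v > a₂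
  obtain ⟨c, hc, hinc⟩ := hsus
  have m1 : p ∈ Finset.Icc 1 n := Finset.mem_Icc.2 ⟨hp1, by omega⟩
  have m2 : u + 1 ∈ Finset.Icc 1 n := Finset.mem_Icc.2 ⟨by omega, htn⟩
  have m3 : u' + 1 ∈ Finset.Icc 1 n := Finset.mem_Icc.2 ⟨by omega, ht'n⟩
  have m4 : s ∈ Finset.Icc 1 n := Finset.mem_Icc.2 ⟨hs1, hsn⟩
  have e : c p = c (u+1) ∨ c p = c (u'+1) ∨ c p = c s ∨
      c (u+1) = c (u'+1) ∨ c (u+1) = c s ∨ c (u'+1) = c s := by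
    have := hc p m1; have := hc (u+1) m2; have := hc (u'+1) m3; have := hc s m4
    omega
  rcases e with e|e|e|e|e|e
  · have := hinc p (u+1) m1 m2 (by omega) e; omega
  · have := hinc p (u'+1) m1 m3 (by omega) e; omega
  · have := hinc p s m1 m4 (by omega) e; omega
  · have := hinc (u+1) (u'+1) m2 m3 (by omega) e; omega
  · have := hinc (u+1) s m2 m4 (by omega) e; omega
  · have := hinc (u'+1) s m3 m4 (by omega) e; omega

/-- Main theorem: two permutations of `{1,…,n}` with `SUS ≤ 3` and
identical buffer sequences are identical. -/
theorem buffer_determines_perm (n : ℕ) (A B : ℕ → ℕ)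
    (hA : IsPermOn A n) (hB : IsPermOn B n)
    (hsA : sus A n ≤ 3) (hsB : sus B n ≤ 3)
    (hbuf : ∀ i ∈ Finset.Icc 1 n, buf A i = buf B i) :
    ∀ i ∈ Finset.Icc 1 n, A i = B i := by
  have hbuf' : ∀ i ≤ n, buf A i = buf B i := by
    intro i hi
    rcases Nat.eq_zero_or_pos i with rfl | hpos
    · rw [buf_zero, buf_zero]
    · exact hbuf i (Finset.mem_Icc.2 ⟨hpos, hi⟩)
  have hbuf'' : ∀ i ≤ n, buf B i = buf A i := fun i h => (hbuf' i h).symm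
  have hsA3 := susle_of_sus_le hsA
  have hsB3 := susle_of_sus_le hsB
  by_contra hcon
  push_neg at hcon
  obtain ⟨i₀, hi₀, hne₀⟩ := hcon
  have hSne : {i | (1 ≤ i ∧ i ≤ n) ∧ A i ≠ B i}.Nonempty := by
    refine ⟨i₀, ⟨?_, hne₀⟩⟩
    simp only [Finset.mem_Icc] at hi₀; exact hi₀
  obtain ⟨t, htdef⟩ : ∃ t, t = sInf {i | (1 ≤ i ∧ i ≤ n) ∧ A i ≠ B i} := ⟨_, rfl⟩
  have hmem := Nat.sInf_mem hSne
  rw [← htdef] at hmem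
  obtain ⟨⟨ht1, htn⟩, htne⟩ := hmem
  have hagree : ∀ j, 1 ≤ j → j ≤ t - 1 → A j = B j := by
    intro j hj1 hj2
    by_contra hc
    have : sInf {i | (1 ≤ i ∧ i ≤ n) ∧ A i ≠ B i} ≤ j := Nat.sInf_le ⟨⟨hj1, by omega⟩, hc⟩
    omega
  obtain ⟨u, rfl⟩ : ∃ u, t = u + 1 := ⟨t - 1, by omega⟩
  have hagree' : ∀ j, 1 ≤ j → j ≤ u → A j = B j := fun j h1 h2 => hagree j h1 (by omega)
  rcases Nat.lt_or_ge (A (u+1)) (B (u+1)) with h | h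
  · exact absurd (no_disagree hB hA hbuf'' hsB3 u htn
      (fun j h1 h2 => (hagree' j h1 h2).symm) h) (fun x => x)
  · have h' : B (u+1) < A (u+1) := by omega
    exact absurd (no_disagree hA hB hbuf' hsA3 u htn hagree' h') (fun x => x)
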